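/- Let α, β > 0 and let {ε_k}_{k∈ℕ} be nonnegative reals with ∑_{k=0}^∞ ε_k² < +∞. Let {x^k} ⊆ ℓ² with F(x^0) < +∞ satisfy, for every k ∈ ℕ, (H1°): F(x^{k+1}) ≤ F(x^k) − α‖x^{k+1} − x^k‖² + ε_k², and (H2°): there exists w^{k+1} ∈ ℓ² with w^{k+1}_i = 2⟨A e_i, A x^{k+1} − b⟩ + λ_i p|x^{k+1}_i|^{p−1}sign(x^{k+1}_i) for every i ∈ supp(x^{k+1}) and ‖w^{k+1}‖ ≤ β‖x^{k+1} − x^k‖ + ε_k. Then there exist N ∈ ℕ and a finite index set J ⊆ ℕ such that supp(x^k) = J for every k ≥ N. -/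

import Mathlib

open scoped RealInnerProductSpace ENNReal

set_option maxHeartbeats 1000000 in
/-- Proposition 6.1, consistency of supports in ℓ²: for the weighted
ℓ_p regularized objective `F x = ‖Ax - b‖² + ∑ᵢ λᵢ |xᵢ|^p` on ℓ² (values in `[0,∞]`), with
weights `λᵢ ≥ λ̲ > 0`, `α, β > 0`, `∑ ε_k² < ∞`, `F(x⁰) < ∞`, if `{x^k}` satisfies the
inexact descent conditions (H1°) (stated additively in `[0,∞]`:
`F(x^{k+1}) + α‖x^{k+1}-x^k‖² ≤ F(x^k) + ε_k²`) and (H2°), then there exist `N` and a finite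
index set `J` with `supp(x^k) = J` for all `k ≥ N`. -/
theorem stmt16 (H : Type*) [NormedAddCommGroup H] [InnerProductSpace ℝ H]
    (A : lp (fun _ : ℕ => ℝ) 2 →L[ℝ] H) (b : H)
    (p : ℝ) (hp0 : 0 < p) (hp1 : p < 1)
    (lam : ℕ → ℝ) (lamlb : ℝ) (hlb : 0 < lamlb) (hlam : ∀ i, lamlb ≤ lam i)
    (F : lp (fun _ : ℕ => ℝ) 2 → ℝ≥0∞)
    (hF : ∀ x, F x = ENNReal.ofReal (‖A x - b‖ ^ 2) + ∑' i, ENNReal.ofReal (lam i * |x i| ^ p))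
    (α β : ℝ) (hα : 0 < α) (hβ : 0 < β)
    (ε : ℕ → ℝ) (hε : ∀ k, 0 ≤ ε k) (hsum : Summable fun k => ε k ^ 2)
    (x : ℕ → lp (fun _ : ℕ => ℝ) 2) (hF0 : F (x 0) < ⊤)
    (hH1 : ∀ k, F (x (k + 1)) + ENNReal.ofReal (α * ‖x (k + 1) - x k‖ ^ 2)
      ≤ F (x k) + ENNReal.ofReal (ε k ^ 2))
    (hH2 : ∀ k, ∃ w : lp (fun _ : ℕ => ℝ) 2,
      (∀ i, x (k + 1) i ≠ 0 →
        w i = 2 * ⟪A (lp.single 2 i (1 : ℝ)), A (x (k + 1)) - b⟫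
          + lam i * p * |x (k + 1) i| ^ (p - 1) * Real.sign (x (k + 1) i)) ∧
      ‖w‖ ≤ β * ‖x (k + 1) - x k‖ + ε k) :
    ∃ N : ℕ, ∃ J : Finset ℕ, ∀ k ≥ N, {i : ℕ | x k i ≠ 0} = ↑J := by
  classical
  set M : ℝ≥0∞ := F (x 0) + ENNReal.ofReal (∑' k, ε k ^ 2) with hMdef
  have hMne : M ≠ ⊤ := by
    simp [hMdef, ENNReal.add_ne_top, hF0.ne]
  have hofsum : ENNReal.ofReal (∑' k, ε k ^ 2) = ∑' k, ENNReal.ofReal (ε k ^ 2) :=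
    ENNReal.ofReal_tsum_of_nonneg (fun k => sq_nonneg _) hsum
  -- partial sums inequality
  have key : ∀ n, (∑ k ∈ Finset.range n, ENNReal.ofReal (α * ‖x (k+1) - x k‖ ^ 2)) + F (x n)
      ≤ F (x 0) + ∑ k ∈ Finset.range n, ENNReal.ofReal (ε k ^ 2) := by
    intro n
    induction n with
    | zero => simp
    | succ n ih =>
      rw [Finset.sum_range_succ, Finset.sum_range_succ]
      calc (∑ k ∈ Finset.range n, ENNReal.ofReal (α * ‖x (k+1) - x k‖ ^ 2))
            + ENNReal.ofReal (α * ‖x (n+1) - x n‖ ^ 2) + F (x (n+1))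
          = (∑ k ∈ Finset.range n, ENNReal.ofReal (α * ‖x (k+1) - x k‖ ^ 2))
            + (F (x (n+1)) + ENNReal.ofReal (α * ‖x (n+1) - x n‖ ^ 2)) := by ring
        _ ≤ (∑ k ∈ Finset.range n, ENNReal.ofReal (α * ‖x (k+1) - x k‖ ^ 2))
            + (F (x n) + ENNReal.ofReal (ε n ^ 2)) := add_le_add le_rfl (hH1 n)
        _ = ((∑ k ∈ Finset.range n, ENNReal.ofReal (α * ‖x (k+1) - x k‖ ^ 2)) + F (x n))
            + ENNReal.ofReal (ε n ^ 2) := by ring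
        _ ≤ (F (x 0) + ∑ k ∈ Finset.range n, ENNReal.ofReal (ε k ^ 2))
            + ENNReal.ofReal (ε n ^ 2) := by gcongr
        _ = F (x 0) + (∑ k ∈ Finset.range n, ENNReal.ofReal (ε k ^ 2)
            + ENNReal.ofReal (ε n ^ 2)) := by ring
  have hFle : ∀ n, F (x n) ≤ M := by
    intro n
    calc F (x n) ≤ (∑ k ∈ Finset.range n, ENNReal.ofReal (α * ‖x (k+1) - x k‖ ^ 2)) + F (x n) :=
          le_add_self
      _ ≤ F (x 0) + ∑ k ∈ Finset.range n, ENNReal.ofReal (ε k ^ 2) := key n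
      _ ≤ M := by
          rw [hMdef, hofsum]
          gcongr
          exact ENNReal.sum_le_tsum _
  -- summability of increments
  have hsum2 : Summable (fun k => α * ‖x (k+1) - x k‖ ^ 2) := by
    apply summable_of_sum_range_le (c := M.toReal)
      (fun n => mul_nonneg hα.le (sq_nonneg _))
    intro n
    rw [← ENNReal.ofReal_le_iff_le_toReal hMne,
      ENNReal.ofReal_sum_of_nonneg (fun i _ => mul_nonneg hα.le (sq_nonneg _))]
    calc (∑ k ∈ Finset.range n, ENNReal.ofReal (α * ‖x (k+1) - x k‖ ^ 2))
        ≤ (∑ k ∈ Finset.range n, ENNReal.ofReal (α * ‖x (k+1) - x k‖ ^ 2)) + F (x n) :=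
          le_add_right le_rfl
      _ ≤ F (x 0) + ∑ k ∈ Finset.range n, ENNReal.ofReal (ε k ^ 2) := key n
      _ ≤ M := by
          rw [hMdef, hofsum]; gcongr; exact ENNReal.sum_le_tsum _
  have hΔ : Filter.Tendsto (fun k => ‖x (k+1) - x k‖) Filter.atTop (nhds 0) := by
    have h1 := hsum2.tendsto_atTop_zero
    have h2 : Filter.Tendsto (fun k => Real.sqrt ((α * ‖x (k+1) - x k‖ ^ 2) / α))
        Filter.atTop (nhds 0) := by
      have := (h1.div_const α).sqrt
      simpa using this
    have heq : (fun k => ‖x (k+1) - x k‖)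
        = fun k => Real.sqrt ((α * ‖x (k+1) - x k‖ ^ 2) / α) := by
      funext k
      rw [mul_div_cancel_left₀ _ hα.ne', Real.sqrt_sq (norm_nonneg _)]
    rw [heq]; exact h2
  have hεt : Filter.Tendsto ε Filter.atTop (nhds 0) := by
    have h1 := hsum.tendsto_atTop_zero
    have h2 : Filter.Tendsto (fun k => Real.sqrt (ε k ^ 2)) Filter.atTop (nhds 0) := by
      have := h1.sqrt; simpa using this
    have heq : ε = fun k => Real.sqrt (ε k ^ 2) := by
      funext k; rw [Real.sqrt_sq (hε k)]
    rw [heq]; exact h2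
  -- bound on residual
  set C₁ : ℝ := Real.sqrt M.toReal with hC1def
  have hC1 : ∀ k, ‖A (x k) - b‖ ≤ C₁ := by
    intro k
    have h1 : ENNReal.ofReal (‖A (x k) - b‖ ^ 2) ≤ M := by
      calc ENNReal.ofReal (‖A (x k) - b‖ ^ 2) ≤ F (x k) := by rw [hF]; exact le_add_right le_rfl
        _ ≤ M := hFle k
    have h2 : ‖A (x k) - b‖ ^ 2 ≤ M.toReal :=
      (ENNReal.ofReal_le_iff_le_toReal hMne).mp h1
    exact (Real.le_sqrt (norm_nonneg _) ENNReal.toReal_nonneg).mpr h2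
  have htsum : ∀ k, (∑' i, ENNReal.ofReal (lam i * |x k i| ^ p)) ≤ M := by
    intro k
    calc (∑' i, ENNReal.ofReal (lam i * |x k i| ^ p)) ≤ F (x k) := by
          rw [hF]; exact le_add_self
      _ ≤ M := hFle k
  set C₂ : ℝ := 2 * ‖A‖ * C₁ with hC2def
  have hC1nn : 0 ≤ C₁ := Real.sqrt_nonneg _
  have hC2nn : 0 ≤ C₂ := by positivity
  have hinner : ∀ k i, |2 * ⟪A (lp.single 2 i (1 : ℝ)), A (x k) - b⟫| ≤ C₂ := by
    intro k i
    have hs : ‖lp.single (E := fun _ : ℕ => ℝ) 2 i (1:ℝ)‖ = 1 := by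
      have h := lp.norm_single (E := fun _ : ℕ => ℝ) (p := 2) (by norm_num) i (1:ℝ)
      simpa using h
    have h1 : ‖A (lp.single 2 i (1 : ℝ))‖ ≤ ‖A‖ := by
      have h := A.le_opNorm (lp.single (E := fun _ : ℕ => ℝ) 2 i (1:ℝ))
      rw [hs, mul_one] at h
      exact h
    have h2 : |⟪A (lp.single 2 i (1 : ℝ)), A (x k) - b⟫| ≤ ‖A‖ * C₁ :=
      (abs_real_inner_le_norm _ _).trans
        (mul_le_mul h1 (hC1 k) (norm_nonneg _) (norm_nonneg _))
    rw [abs_mul, abs_two]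
    calc 2 * |⟪A (lp.single 2 i (1 : ℝ)), A (x k) - b⟫| ≤ 2 * (‖A‖ * C₁) := by linarith
      _ = C₂ := by rw [hC2def]; ring
  -- threshold δ
  set c : ℝ := (C₂ + 1) / (lamlb * p) with hcdef
  have hc : 0 < c := by positivity
  set δ : ℝ := c ^ (1 / (p - 1)) with hδdef
  have hδ : 0 < δ := Real.rpow_pos_of_pos hc _
  have hp1' : p - 1 < 0 := by linarith
  have hδpow : δ ^ (p - 1) = c := by
    rw [hδdef, ← Real.rpow_mul hc.le, one_div, inv_mul_cancel₀ (by linarith : p - 1 ≠ 0),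
      Real.rpow_one]
  have hsign : ∀ t : ℝ, t ≠ 0 → |Real.sign t| = 1 := by
    intro t ht
    rcases lt_trichotomy t 0 with h | h | h
    · rw [Real.sign_of_neg h]; norm_num
    · exact absurd h ht
    · rw [Real.sign_of_pos h]; norm_num
  -- eventually nonzero entries exceed δ
  have hsmallw : ∀ᶠ k in Filter.atTop, β * ‖x (k+1) - x k‖ + ε k < 1 := by
    have : Filter.Tendsto (fun k => β * ‖x (k+1) - x k‖ + ε k) Filter.atTop (nhds 0) := by
      have := (hΔ.const_mul β).add hεt
      simpa using this
    exact this.eventually_lt_const one_pos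
  obtain ⟨K, hK⟩ := Filter.eventually_atTop.mp hsmallw
  have hbig : ∀ k, K ≤ k → ∀ i, x (k+1) i ≠ 0 → δ < |x (k+1) i| := by
    intro k hk i hi
    by_contra hle
    push_neg at hle
    obtain ⟨w, hw1, hw2⟩ := hH2 k
    have hwi : |w i| ≤ ‖w‖ := by
      have := lp.norm_apply_le_norm (by norm_num : (2 : ℝ≥0∞) ≠ 0) w i
      simpa [Real.norm_eq_abs] using this
    have hwlt : |w i| < 1 := by
      have := hK k hk
      calc |w i| ≤ ‖w‖ := hwi
        _ ≤ β * ‖x (k+1) - x k‖ + ε k := hw2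
        _ < 1 := this
    have hxpos : 0 < |x (k+1) i| := abs_pos.mpr hi
    have hpow : c ≤ |x (k+1) i| ^ (p - 1) := by
      rw [← hδpow]
      exact Real.rpow_le_rpow_of_nonpos hxpos hle hp1'.le
    set a : ℝ := 2 * ⟪A (lp.single 2 i (1 : ℝ)), A (x (k+1)) - b⟫ with hadef
    set s : ℝ := lam i * p * |x (k+1) i| ^ (p - 1) * Real.sign (x (k+1) i) with hsdef
    have hwieq : w i = a + s := hw1 i hi
    have habs : |a| ≤ C₂ := hinner (k+1) i
    have hsabs : C₂ + 1 ≤ |s| := by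
      rw [hsdef, abs_mul, hsign _ hi, mul_one, abs_mul, abs_of_pos (mul_pos (hlb.trans_le (hlam i)) hp0),
        abs_of_pos (Real.rpow_pos_of_pos hxpos _)]
      calc C₂ + 1 = (lamlb * p) * c := by
            rw [hcdef]; field_simp
        _ ≤ (lam i * p) * |x (k+1) i| ^ (p - 1) := by
            apply mul_le_mul _ hpow hc.le _
            · exact mul_le_mul_of_nonneg_right (hlam i) hp0.le
            · exact mul_nonneg (hlb.le.trans (hlam i)) hp0.le
    have h1le : 1 ≤ |w i| := by
      rw [hwieq]
      have : |s| ≤ |a + s| + |a| := by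
        calc |s| = |a + s + -a| := by ring_nf
          _ ≤ |a + s| + |-a| := abs_add_le _ _
          _ = |a + s| + |a| := by rw [abs_neg]
      linarith
    linarith
  -- supports are finite
  have hfin : ∀ m, K + 1 ≤ m → {i : ℕ | x m i ≠ 0}.Finite := by
    intro m hm
    obtain ⟨k, rfl⟩ : ∃ k, m = k + 1 := ⟨m - 1, by omega⟩
    have hk : K ≤ k := by omega
    have hc' : (ENNReal.ofReal (lamlb * δ ^ p)) ≠ 0 := by
      rw [ne_eq, ENNReal.ofReal_eq_zero, not_le]
      positivity
    have hfin0 := ENNReal.finite_const_le_of_tsum_ne_top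
      (a := fun i => ENNReal.ofReal (lam i * |x (k+1) i| ^ p))
      ((lt_of_le_of_lt (htsum (k+1)) hMne.lt_top).ne) hc'
    apply hfin0.subset
    intro i hi
    simp only [Set.mem_setOf_eq] at hi ⊢
    have hδlt := hbig k hk i hi
    apply ENNReal.ofReal_le_ofReal
    exact mul_le_mul (hlam i) (Real.rpow_le_rpow hδ.le hδlt.le hp0.le)
      (by positivity) (hlb.le.trans (hlam i))
  -- increments eventually below δ
  obtain ⟨K₂, hK₂⟩ := Filter.eventually_atTop.mp (hΔ.eventually_lt_const hδ)
  set N : ℕ := max (K + 1) K₂ with hNdef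
  have hNK : K + 1 ≤ N := le_max_left _ _
  have hNK₂ : K₂ ≤ N := le_max_right _ _
  -- support stability
  have happle : ∀ (k : ℕ) (i : ℕ), |x (k+1) i - x k i| ≤ ‖x (k+1) - x k‖ := by
    intro k i
    have := lp.norm_apply_le_norm (by norm_num : (2 : ℝ≥0∞) ≠ 0) (x (k+1) - x k) i
    simpa [Real.norm_eq_abs] using this
  have hstep : ∀ k, N ≤ k → {i : ℕ | x (k+1) i ≠ 0} = {i : ℕ | x k i ≠ 0} := by
    intro k hk
    have hΔk : ‖x (k+1) - x k‖ < δ := hK₂ k (hNK₂.trans hk)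
    ext i
    simp only [Set.mem_setOf_eq]
    constructor
    · intro hi1
      by_contra hi0
      have h1 : δ < |x (k+1) i| := hbig k (by omega) i hi1
      have h2 : |x (k+1) i - x k i| ≤ ‖x (k+1) - x k‖ := happle k i
      rw [hi0, sub_zero] at h2
      linarith
    · intro hi0
      by_contra hi1
      obtain ⟨j, rfl⟩ : ∃ j, k = j + 1 := ⟨k - 1, by omega⟩
      have h1 : δ < |x (j+1) i| := hbig j (by omega) i hi0
      have h2 : |x (j+1+1) i - x (j+1) i| ≤ ‖x (j+1+1) - x (j+1)‖ := happle (j+1) i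
      rw [hi1, zero_sub, abs_neg] at h2
      linarith
  have hconst : ∀ k, N ≤ k → {i : ℕ | x k i ≠ 0} = {i : ℕ | x N i ≠ 0} := by
    intro k hk
    induction k, hk using Nat.le_induction with
    | base => rfl
    | succ n hn ih => rw [hstep n hn, ih]
  have hfinN : {i : ℕ | x N i ≠ 0}.Finite := hfin N hNK
  refine ⟨N, hfinN.toFinset, ?_⟩
  intro k hk
  rw [hconst k hk, Set.Finite.coe_toFinset]
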